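/- Let M be an infinite, bounded, uniformly discrete metric space. Then there exist a > 0 and a sequence (u_i)_{i∈ℕ} in M such that a·(i−1)/i ≤ d(u_i, u_j) ≤ a·(i+1)/i for all i, j ∈ ℕ with i < j. -/

import Mathlib

open Metric Set Filter NNReal

noncomputable section

/-- The topological dual of a normed space (Mathlib's former `NormedSpace.Dual`). -/
abbrev NormedSpace.Dual (𝕜 : Type*) [RCLike 𝕜] (E : Type*) [SeminormedAddCommGroup E]
    [NormedSpace 𝕜 E] : Type _ :=
  E →L[𝕜] 𝕜

namespace DeltaPaper

/-! ### Generic Banach space notions -/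

variable {X : Type*} [NormedAddCommGroup X] [NormedSpace ℝ X]

/-- `x` is a Daugavet-point: every slice of the unit ball contains, for every `ε > 0`,
an element at distance at least `2 - ε` from `x`. -/
def IsDaugavetPoint (x : X) : Prop :=
  ∀ (φ : NormedSpace.Dual ℝ X) (α : ℝ), ‖φ‖ = 1 → 0 < α → ∀ ε > 0,
    ∃ y : X, ‖y‖ ≤ 1 ∧ 1 - α < φ y ∧ 2 - ε ≤ ‖x - y‖

/-- `x` is a Δ-point: every slice of the unit ball containing `x` contains, for every
`ε > 0`, an element at distance at least `2 - ε` from `x`. -/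
def IsDeltaPoint (x : X) : Prop :=
  ∀ (φ : NormedSpace.Dual ℝ X) (α : ℝ), ‖φ‖ = 1 → 0 < α → 1 - α < φ x → ∀ ε > 0,
    ∃ y : X, ‖y‖ ≤ 1 ∧ 1 - α < φ y ∧ 2 - ε ≤ ‖x - y‖

/-- `x*` is a w*-Daugavet-point of the dual of `X`. -/
def IsWeakStarDaugavetPoint (f : NormedSpace.Dual ℝ X) : Prop :=
  ∀ (x : X) (α : ℝ), ‖x‖ = 1 → 0 < α → ∀ ε > 0,
    ∃ g : NormedSpace.Dual ℝ X, ‖g‖ ≤ 1 ∧ 1 - α < g x ∧ 2 - ε ≤ ‖f - g‖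

/-- `x*` is a w*-Δ-point of the dual of `X`. -/
def IsWeakStarDeltaPoint (f : NormedSpace.Dual ℝ X) : Prop :=
  ∀ (x : X) (α : ℝ), ‖x‖ = 1 → 0 < α → 1 - α < f x → ∀ ε > 0,
    ∃ g : NormedSpace.Dual ℝ X, ‖g‖ ≤ 1 ∧ 1 - α < g x ∧ 2 - ε ≤ ‖f - g‖

/-- `x` is a denting point of the unit ball: it lies in slices of the unit ball of
arbitrarily small diameter. -/
def IsDentingPoint (x : X) : Prop :=
  ‖x‖ ≤ 1 ∧ ∀ ε > 0, ∃ (φ : NormedSpace.Dual ℝ X) (α : ℝ), ‖φ‖ = 1 ∧ 0 < α ∧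
    1 - α < φ x ∧ Metric.diam {y : X | ‖y‖ ≤ 1 ∧ 1 - α < φ y} < ε

/-- The Kuratowski measure of non-compactness of a set: the infimum of all `ε > 0`
such that the set can be covered by finitely many sets of diameter less than `ε`. -/
def kuratowski {Y : Type*} [PseudoMetricSpace Y] (A : Set Y) : ℝ :=
  sInf {ε : ℝ | 0 < ε ∧ ∃ 𝒞 : Finset (Set Y), (A ⊆ ⋃ B ∈ 𝒞, B) ∧ ∀ B ∈ 𝒞, Metric.diam B < ε}

/-! ### The space of Lipschitz functions vanishing at a base point -/

variable {M : Type*} [PseudoMetricSpace M]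

/-- The least Lipschitz constant of a function. -/
def lipConst (f : M → ℝ) : ℝ≥0 := sInf {K | LipschitzWith K f}

theorem lipschitzWith_lipConst {f : M → ℝ} (hf : ∃ K, LipschitzWith K f) :
    LipschitzWith (lipConst f) f := by
  obtain ⟨K₀, hK₀⟩ := hf
  rw [lipschitzWith_iff_dist_le_mul]
  intro x y
  rcases le_or_gt (dist x y) 0 with h | h
  · have h0 : dist x y = 0 := le_antisymm h dist_nonneg
    have := hK₀.dist_le_mul x y
    rw [h0, mul_zero] at this ⊢
    exact this
  · rw [← div_le_iff₀ h]
    have hnn : 0 ≤ dist (f x) (f y) / dist x y := by positivity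
    rw [← Real.coe_toNNReal _ hnn, NNReal.coe_le_coe]
    refine le_csInf ⟨K₀, hK₀⟩ ?_
    intro K hK
    rw [← NNReal.coe_le_coe, Real.coe_toNNReal _ hnn, div_le_iff₀ h]
    exact hK.dist_le_mul x y

theorem lipConst_le {f : M → ℝ} {K : ℝ≥0} (hK : LipschitzWith K f) : lipConst f ≤ K :=
  csInf_le (OrderBot.bddBelow _) hK

theorem lipschitzWith_smul {f : M → ℝ} {K : ℝ≥0} (hK : LipschitzWith K f) (c : ℝ) :
    LipschitzWith (‖c‖₊ * K) (c • f) := by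
  rw [lipschitzWith_iff_dist_le_mul] at *
  intro x y
  have : dist ((c • f) x) ((c • f) y) = ‖c‖ * dist (f x) (f y) := by
    simp only [Pi.smul_apply, smul_eq_mul, Real.dist_eq, ← mul_sub, abs_mul, Real.norm_eq_abs]
  rw [this, NNReal.coe_mul, coe_nnnorm, mul_assoc]
  exact mul_le_mul_of_nonneg_left (hK x y) (norm_nonneg c)

variable (M) in
/-- The submodule of `M → ℝ` consisting of Lipschitz functions vanishing at the
base point `z`. -/
def Lip0 (z : M) : Submodule ℝ (M → ℝ) where
  carrier := {f | (∃ K, LipschitzWith K f) ∧ f z = 0}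
  add_mem' := by
    rintro f g ⟨⟨K, hK⟩, hf0⟩ ⟨⟨L, hL⟩, hg0⟩
    exact ⟨⟨K + L, hK.add hL⟩, by simp [hf0, hg0]⟩
  zero_mem' := ⟨⟨0, LipschitzWith.const' 0⟩, rfl⟩
  smul_mem' := by
    rintro c f ⟨⟨K, hK⟩, hf0⟩
    exact ⟨⟨‖c‖₊ * K, lipschitzWith_smul hK c⟩, by simp [hf0]⟩

variable {z : M}

instance : NormedAddCommGroup ↥(Lip0 M z) :=
  AddGroupNorm.toNormedAddCommGroup
    { toFun := fun f => ((lipConst (f : M → ℝ) : ℝ≥0) : ℝ)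
      map_zero' := by
        have h0 : lipConst (0 : M → ℝ) = 0 :=
          le_antisymm (lipConst_le (by simpa using LipschitzWith.const' (0 : ℝ))) bot_le
        show ((lipConst ((0 : ↥(Lip0 M z)) : M → ℝ) : ℝ≥0) : ℝ) = 0
        rw [show ((0 : ↥(Lip0 M z)) : M → ℝ) = 0 from rfl, h0, NNReal.coe_zero]
      add_le' := by
        intro f g
        have hf := lipschitzWith_lipConst f.2.1
        have hg := lipschitzWith_lipConst g.2.1
        have : lipConst ((f + g : ↥(Lip0 M z)) : M → ℝ) ≤
            lipConst (f : M → ℝ) + lipConst (g : M → ℝ) := by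
          refine lipConst_le ?_
          have := hf.add hg
          exact this
        exact_mod_cast this
      neg' := by
        intro f
        show ((lipConst ((-f : ↥(Lip0 M z)) : M → ℝ) : ℝ≥0) : ℝ) = _
        rw [show ((-f : ↥(Lip0 M z)) : M → ℝ) = -(f : M → ℝ) from rfl]
        unfold lipConst
        congr 2
        ext K
        exact ⟨fun hK => by simpa using hK.neg, fun hK => hK.neg⟩
      eq_zero_of_map_eq_zero' := by
        intro f hf
        replace hf : ((lipConst (f : M → ℝ) : ℝ≥0) : ℝ) = 0 := hf
        have h0 : lipConst (f : M → ℝ) = 0 := by exact_mod_cast hf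
        have hl : LipschitzWith 0 (f : M → ℝ) := h0 ▸ lipschitzWith_lipConst f.2.1
        ext x
        have := hl.dist_le_mul x z
        simp only [NNReal.coe_zero, zero_mul] at this
        have hxz : (f : M → ℝ) x = (f : M → ℝ) z :=
          dist_le_zero.mp this
        simpa [f.2.2] using hxz }

theorem Lip0.norm_def (f : ↥(Lip0 M z)) : ‖f‖ = ((lipConst (f : M → ℝ) : ℝ≥0) : ℝ) := rfl

theorem Lip0.lipschitzWith (f : ↥(Lip0 M z)) : LipschitzWith (lipConst (f : M → ℝ)) (f : M → ℝ) :=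
  lipschitzWith_lipConst f.2.1

instance : NormedSpace ℝ ↥(Lip0 M z) where
  norm_smul_le c f := by
    have : lipConst ((c • f : ↥(Lip0 M z)) : M → ℝ) ≤ ‖c‖₊ * lipConst (f : M → ℝ) :=
      lipConst_le (lipschitzWith_smul (Lip0.lipschitzWith f) c)
    calc ‖c • f‖ = ((lipConst ((c • f : ↥(Lip0 M z)) : M → ℝ) : ℝ≥0) : ℝ) := rfl
      _ ≤ ((‖c‖₊ * lipConst (f : M → ℝ) : ℝ≥0) : ℝ) := by exact_mod_cast this
      _ = ‖c‖ * ‖f‖ := by push_cast [Lip0.norm_def]; rfl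

variable (M z) in
/-- The evaluation functional `δ_x ∈ Lip₀(M)*`. -/
def evalδ (x : M) : NormedSpace.Dual ℝ ↥(Lip0 M z) :=
  LinearMap.mkContinuous
    { toFun := fun f => (f : M → ℝ) x
      map_add' := fun f g => rfl
      map_smul' := fun c f => rfl }
    (dist x z)
    (by
      intro f
      have := (Lip0.lipschitzWith f).dist_le_mul x z
      simp only [f.2.2, Real.dist_eq, sub_zero] at this
      calc ‖(f : M → ℝ) x‖ = |(f : M → ℝ) x - 0| := by simp
        _ ≤ (lipConst (f : M → ℝ) : ℝ) * dist x z := by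
            simpa [f.2.2, Real.dist_eq] using (Lip0.lipschitzWith f).dist_le_mul x z
        _ = dist x z * ‖f‖ := by rw [Lip0.norm_def, mul_comm])

variable (M z) in
/-- The Lipschitz-free space over `M`: the closed linear span of the evaluation
functionals inside `Lip₀(M)*`. -/
def FreeSpace : Submodule ℝ (NormedSpace.Dual ℝ ↥(Lip0 M z)) :=
  (Submodule.span ℝ (Set.range (evalδ M z))).topologicalClosure

variable (M z) in
/-- The molecule `m_{x y} = (δ_x - δ_y)/d(x,y)` as an element of `Lip₀(M)*`. -/
def molecule (x y : M) : NormedSpace.Dual ℝ ↥(Lip0 M z) :=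
  (dist x y)⁻¹ • (evalδ M z x - evalδ M z y)

theorem molecule_mem_freeSpace (x y : M) : molecule M z x y ∈ FreeSpace M z :=
  Submodule.le_topologicalClosure _
    (Submodule.smul_mem _ _ (Submodule.sub_mem _
      (Submodule.subset_span ⟨x, rfl⟩) (Submodule.subset_span ⟨y, rfl⟩)))

variable (M z) in
/-- The molecule `m_{x y}` as an element of the free space `F(M)`. -/
def mol (x y : M) : ↥(FreeSpace M z) := ⟨molecule M z x y, molecule_mem_freeSpace x y⟩

variable (M) in
/-- A metric space is uniformly discrete if distances between distinct points are
bounded below by a positive constant. -/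
def UniformlyDiscrete : Prop := ∃ θ > (0:ℝ), ∀ x y : M, x ≠ y → θ ≤ dist x y

/-- A norm-one Lipschitz function is local if its Lipschitz constant is approximated
on pairs of arbitrarily close points. -/
def IsLocal (f : ↥(Lip0 M z)) : Prop :=
  ∀ ε > 0, ∃ u v : M, u ≠ v ∧
    ‖f‖ - ε < ((f : M → ℝ) u - (f : M → ℝ) v) / dist u v ∧ dist u v < ε

/-- `f ∈ S_{Lip₀(M)}` is a w*-Daugavet-point: for every w*-slice `S(μ, α)` of
`B_{Lip₀(M)}` (`μ` a norm-one element of `F(M)`) and every `ε > 0` there is `g` in the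
slice with `‖f - g‖ ≥ 2 - ε`. -/
def IsLipWeakStarDaugavetPoint (f : ↥(Lip0 M z)) : Prop :=
  ∀ μ : NormedSpace.Dual ℝ ↥(Lip0 M z), μ ∈ FreeSpace M z → ‖μ‖ = 1 → ∀ α > (0:ℝ), ∀ ε > (0:ℝ),
    ∃ g : ↥(Lip0 M z), ‖g‖ ≤ 1 ∧ 1 - α < μ g ∧ 2 - ε ≤ ‖f - g‖

/-- `f ∈ S_{Lip₀(M)}` is a w*-Δ-point: the same as above, but only for w*-slices
containing `f`. -/
def IsLipWeakStarDeltaPoint (f : ↥(Lip0 M z)) : Prop :=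
  ∀ μ : NormedSpace.Dual ℝ ↥(Lip0 M z), μ ∈ FreeSpace M z → ‖μ‖ = 1 → ∀ α > (0:ℝ),
    1 - α < μ f → ∀ ε > (0:ℝ),
    ∃ g : ↥(Lip0 M z), ‖g‖ ≤ 1 ∧ 1 - α < μ g ∧ 2 - ε ≤ ‖f - g‖

end DeltaPaper

open DeltaPaper


section Ramsey17

/-- One step of the Ramsey construction. -/
lemma ramsey_step {α : Type*} (r : α → α → Prop) {S : Set α} (hS : S.Infinite) :
    ∃ (x : α) (b : Bool) (S' : Set α), x ∈ S ∧ S' ⊆ S ∧ S'.Infinite ∧ x ∉ S' ∧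
      ∀ y ∈ S', (r x y ↔ b = true) := by
  obtain ⟨x, hx⟩ := hS.nonempty
  set A : Set α := {y ∈ S | y ≠ x ∧ r x y} with hA
  set B : Set α := {y ∈ S | y ≠ x ∧ ¬ r x y} with hB
  have hsub : S \ {x} ⊆ A ∪ B := by
    intro y hy
    rcases Classical.em (r x y) with h | h
    · exact Or.inl ⟨hy.1, hy.2, h⟩
    · exact Or.inr ⟨hy.1, hy.2, h⟩
  have hinf : (A ∪ B).Infinite := ((hS.diff (finite_singleton x)).mono hsub)
  rcases Set.infinite_union.mp hinf with h | h
  · exact ⟨x, true, A, hx, fun y hy => hy.1, h, fun hxA => hxA.2.1 rfl,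
      fun y hy => ⟨fun _ => rfl, fun _ => hy.2.2⟩⟩
  · refine ⟨x, false, B, hx, fun y hy => hy.1, h, fun hxB => hxB.2.1 rfl, ?_⟩
    intro y hy
    simp [hy.2.2]

/-- Infinite Ramsey theorem for pairs, two colors, symmetric relation. -/
lemma ramsey_two {α : Type*} (r : α → α → Prop) (hr : ∀ x y, r x y → r y x)
    {S : Set α} (hS : S.Infinite) :
    (∃ T ⊆ S, T.Infinite ∧ ∀ x ∈ T, ∀ y ∈ T, x ≠ y → r x y) ∨
    (∃ T ⊆ S, T.Infinite ∧ ∀ x ∈ T, ∀ y ∈ T, x ≠ y → ¬ r x y) := by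
  classical
  -- the step function on infinite sets
  let σ := {S : Set α // S.Infinite}
  have step : ∀ s : σ, ∃ p : α × Bool × σ,
      p.1 ∈ s.1 ∧ p.2.2.1 ⊆ s.1 ∧ p.1 ∉ p.2.2.1 ∧
      ∀ y ∈ p.2.2.1, (r p.1 y ↔ p.2.1 = true) := by
    intro s
    obtain ⟨x, b, S', hx, hsub, hinf, hnot, hiff⟩ := ramsey_step r s.2
    exact ⟨(x, b, ⟨S', hinf⟩), hx, hsub, hnot, hiff⟩
  choose F hF1 hF2 hF3 hF4 using step
  -- the chain
  let c : ℕ → σ := fun n => Nat.rec ⟨S, hS⟩ (fun _ s => (F s).2.2) n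
  have hc : ∀ n, c (n + 1) = (F (c n)).2.2 := fun n => rfl
  let x : ℕ → α := fun n => (F (c n)).1
  let b : ℕ → Bool := fun n => (F (c n)).2.1
  have hxmem : ∀ n, x n ∈ (c n).1 := fun n => hF1 (c n)
  have hsub : ∀ n, (c (n + 1)).1 ⊆ (c n).1 := fun n => hF2 (c n)
  have hnot : ∀ n, x n ∉ (c (n + 1)).1 := fun n => hF3 (c n)
  have hiff : ∀ n, ∀ y ∈ (c (n + 1)).1, (r (x n) y ↔ b n = true) := fun n => hF4 (c n)
  have hchain : ∀ n m, n ≤ m → (c m).1 ⊆ (c n).1 := by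
    intro n m hnm
    induction m with
    | zero => simp_all
    | succ m ih =>
      rcases Nat.lt_or_ge n (m + 1) with h | h
      · exact (hsub m).trans (ih (Nat.lt_succ_iff.mp h))
      · have : n = m + 1 := le_antisymm hnm h
        subst this; exact fun _ h => h
  have hxS : ∀ n, x n ∈ S := fun n => hchain 0 n (Nat.zero_le n) (hxmem n)
  have hxlater : ∀ {n m}, n < m → x m ∈ (c (n + 1)).1 := by
    intro n m h
    exact hchain (n + 1) m h (hxmem m)
  have hxinj : Function.Injective x := by
    intro n m hnm
    by_contra h
    rcases Nat.lt_or_ge n m with hlt | hge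
    · exact hnot n (hnm ▸ hxlater hlt)
    · have hlt : m < n := lt_of_le_of_ne hge (Ne.symm h)
      exact hnot m (hnm ▸ hxlater hlt)
  -- pigeonhole on colors
  have hcolor : {n | b n = true}.Infinite ∨ {n | b n = false}.Infinite := by
    rcases Set.infinite_union.mp (by
      have : {n | b n = true} ∪ {n | b n = false} = univ := by
        ext n
        simp only [mem_union, mem_setOf_eq, mem_univ, iff_true]
        rcases Bool.eq_false_or_eq_true (b n) with h | h <;> simp [h]
      rw [this]; exact infinite_univ) with h | h
    · exact Or.inl h
    · exact Or.inr h
  have key : ∀ β : Bool, {n | b n = β}.Infinite →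
      ∃ T ⊆ S, T.Infinite ∧ ∀ u ∈ T, ∀ v ∈ T, u ≠ v → (r u v ↔ β = true) := by
    intro β hβ
    refine ⟨x '' {n | b n = β}, ?_, hβ.image (hxinj.injOn), ?_⟩
    · rintro _ ⟨n, _, rfl⟩; exact hxS n
    · rintro _ ⟨n, hn, rfl⟩ _ ⟨m, hm, rfl⟩ hne
      have hnm : n ≠ m := fun h => hne (by rw [h])
      have hn' : b n = β := hn
      have hm' : b m = β := hm
      rcases Nat.lt_or_ge n m with hlt | hge
      · rw [hiff n (x m) (hxlater hlt), hn']
      · have hlt : m < n := lt_of_le_of_ne hge (Ne.symm hnm)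
        constructor
        · intro h
          rw [← hm']; exact (hiff m (x n) (hxlater hlt)).mp (hr _ _ h)
        · intro h
          exact hr _ _ ((hiff m (x n) (hxlater hlt)).mpr (hm'.trans h))
  rcases hcolor with h | h
  · obtain ⟨T, hTS, hTinf, hT⟩ := key true h
    exact Or.inl ⟨T, hTS, hTinf, fun u hu v hv hne => (hT u hu v hv hne).mpr rfl⟩
  · obtain ⟨T, hTS, hTinf, hT⟩ := key false h
    exact Or.inr ⟨T, hTS, hTinf, fun u hu v hv hne => fun hruv =>
      by simpa using (hT u hu v hv hne).mp hruv⟩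

end Ramsey17

section Aux17

variable {M : Type*} [MetricSpace M]

/-- The infimum of diameters of infinite subsets of `S`. -/
noncomputable def adiam (S : Set M) : ℝ :=
  sInf (Metric.diam '' {T : Set M | T ⊆ S ∧ T.Infinite})

variable (hb : Bornology.IsBounded (Set.univ : Set M)) {θ : ℝ} (hθ0 : 0 < θ)
  (hθ : ∀ x y : M, x ≠ y → θ ≤ dist x y)

include hb hθ0 hθ

lemma theta_mem_lowerBounds :
    θ ∈ lowerBounds (Metric.diam '' {T : Set M | T ⊆ S₀ ∧ T.Infinite}) := by
  rintro _ ⟨T, ⟨-, hTinf⟩, rfl⟩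
  obtain ⟨u, hu, v, hv, huv⟩ := hTinf.nontrivial
  exact (hθ u v huv).trans (Metric.dist_le_diam_of_mem (hb.subset (subset_univ T)) hu hv)

lemma theta_le_adiam {S : Set M} (hS : S.Infinite) : θ ≤ adiam S :=
  le_csInf ⟨Metric.diam S, ⟨S, ⟨Set.Subset.rfl, hS⟩, rfl⟩⟩
    (fun d hd => theta_mem_lowerBounds hb hθ0 hθ hd)

lemma adiam_le {S T : Set M} (hTS : T ⊆ S) (hT : T.Infinite) : adiam S ≤ Metric.diam T :=
  csInf_le ⟨θ, theta_mem_lowerBounds hb hθ0 hθ⟩ ⟨T, ⟨hTS, hT⟩, rfl⟩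

lemma adiam_anti {S S' : Set M} (h : S' ⊆ S) (hS' : S'.Infinite) : adiam S ≤ adiam S' := by
  refine le_csInf ⟨Metric.diam S', ⟨S', ⟨Set.Subset.rfl, hS'⟩, rfl⟩⟩ ?_
  rintro _ ⟨T, ⟨hTS', hT⟩, rfl⟩
  exact adiam_le hb hθ0 hθ (hTS'.trans h) hT

/-- Key refinement: inside any infinite set there is an infinite subset whose pairwise
distances are within `ε` of `adiam S`. -/
lemma refine_exists {S : Set M} (hS : S.Infinite) {ε : ℝ} (hε : 0 < ε) :
    ∃ S' : Set M, S' ⊆ S ∧ S'.Infinite ∧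
      (∀ x ∈ S', ∀ y ∈ S', dist x y ≤ adiam S + ε) ∧
      (∀ x ∈ S', ∀ y ∈ S', x ≠ y → adiam S - ε ≤ dist x y) := by
  -- find an infinite subset of nearly minimal diameter
  have hne : (Metric.diam '' {T : Set M | T ⊆ S ∧ T.Infinite}).Nonempty :=
    ⟨Metric.diam S, ⟨S, ⟨Set.Subset.rfl, hS⟩, rfl⟩⟩
  have hlt : adiam S < adiam S + ε := by linarith
  obtain ⟨_, ⟨T, ⟨hTS, hTinf⟩, rfl⟩, hTd⟩ :=
    (csInf_lt_iff ⟨θ, theta_mem_lowerBounds hb hθ0 hθ⟩ hne).mp hlt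
  rcases ramsey_two (fun x y : M => adiam S - ε ≤ dist x y)
      (fun x y h => le_of_le_of_eq h (dist_comm x y)) hTinf with ⟨T', hT'T, hT'inf, hT'⟩ | ⟨T', hT'T, hT'inf, hT'⟩
  · refine ⟨T', hT'T.trans hTS, hT'inf, ?_, ?_⟩
    · intro x hx y hy
      exact (Metric.dist_le_diam_of_mem (hb.subset (subset_univ T)) (hT'T hx) (hT'T hy)).trans
        hTd.le
    · exact hT'
  · -- contradiction: `T'` would have diameter `< adiam S`
    exfalso
    obtain ⟨u, hu, v, hv, huv⟩ := hT'inf.nontrivial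
    have h1 : dist u v < adiam S - ε := not_le.mp (hT' u hu v hv huv)
    have h0 : 0 ≤ adiam S - ε := dist_nonneg.trans h1.le
    have hdi : Metric.diam T' ≤ adiam S - ε := by
      refine Metric.diam_le_of_forall_dist_le h0 ?_
      intro x hx y hy
      rcases eq_or_ne x y with rfl | hxy
      · simpa using h0
      · exact (not_le.mp (hT' x hx y hy hxy)).le
    have := adiam_le hb hθ0 hθ (hT'T.trans hTS) hT'inf
    linarith

end Aux17

/-- Lemma 5.5. If `M` is infinite, bounded and uniformly discrete, then
there are `a > 0` and a sequence `(u_i)_{i ≥ 1}` in `M` such that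
`a(i-1)/i ≤ d(u_i, u_j) ≤ a(i+1)/i` whenever `i < j`. -/
theorem statement17 {M : Type*} [MetricSpace M] [Infinite M]
    (hb : Bornology.IsBounded (Set.univ : Set M)) (hud : UniformlyDiscrete M) :
    ∃ a > (0:ℝ), ∃ u : ℕ → M, ∀ i j : ℕ, 1 ≤ i → i < j →
      a * ((i : ℝ) - 1) / i ≤ dist (u i) (u j) ∧
      dist (u i) (u j) ≤ a * ((i : ℝ) + 1) / i := by
    classical
  obtain ⟨θ, hθ0, hθ⟩ := hud
  -- the chain of refined infinite sets
  have step : ∀ (s : {S : Set M // S.Infinite}) (n : ℕ),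
      ∃ s' : {S : Set M // S.Infinite}, s'.1 ⊆ s.1 ∧
        (∀ x ∈ s'.1, ∀ y ∈ s'.1, dist x y ≤ adiam s.1 + 1 / (n + 1)) ∧
        (∀ x ∈ s'.1, ∀ y ∈ s'.1, x ≠ y → adiam s.1 - 1 / (n + 1) ≤ dist x y) := by
    intro s n
    have hn : (0:ℝ) < 1 / (n + 1) := by positivity
    obtain ⟨S', h1, h2, h3, h4⟩ := refine_exists hb hθ0 hθ s.2 hn
    exact ⟨⟨S', h2⟩, h1, h3, h4⟩
  choose F hF1 hF2 hF3 using step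
  let c : ℕ → {S : Set M // S.Infinite} :=
    fun n => Nat.rec ⟨Set.univ, Set.infinite_univ⟩ (fun n s => F s n) n
  have hc : ∀ n, c (n + 1) = F (c n) n := fun n => rfl
  set A : ℕ → ℝ := fun n => adiam (c n).1 with hA
  have hsub : ∀ n, (c (n + 1)).1 ⊆ (c n).1 := fun n => hF1 (c n) n
  have hchain : ∀ n m, n ≤ m → (c m).1 ⊆ (c n).1 := by
    intro n m hnm
    induction m with
    | zero => simp_all
    | succ m ih =>
      rcases Nat.lt_or_ge n (m + 1) with h | h
      · exact (hsub m).trans (ih (Nat.lt_succ_iff.mp h))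
      · have : n = m + 1 := le_antisymm hnm h
        subst this; exact fun _ h => h
  have hAθ : ∀ n, θ ≤ A n := fun n => theta_le_adiam hb hθ0 hθ (c n).2
  have hAmono : ∀ n m, n ≤ m → A n ≤ A m :=
    fun n m h => adiam_anti hb hθ0 hθ (hchain n m h) (c m).2
  -- diameter control of the chain sets
  have hdiam : ∀ n, Metric.diam (c (n + 1)).1 ≤ A n + 1 / (n + 1) := by
    intro n
    have h1 := hAθ n
    have h2 : (0:ℝ) < 1 / ((n:ℝ) + 1) := by positivity
    refine Metric.diam_le_of_forall_dist_le (by linarith) ?_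
    exact hF2 (c n) n
  have hAup : ∀ n m, n + 1 ≤ m → A m ≤ A n + 1 / (n + 1) := by
    intro n m h
    calc A m ≤ Metric.diam (c m).1 :=
          adiam_le hb hθ0 hθ Set.Subset.rfl (c m).2
      _ ≤ Metric.diam (c (n + 1)).1 :=
          Metric.diam_mono (hchain (n + 1) m h) (hb.subset (Set.subset_univ _))
      _ ≤ A n + 1 / (n + 1) := hdiam n
  -- the limit value
  have hbdd : BddAbove (Set.range A) := by
    refine ⟨A 0 + 1, ?_⟩
    rintro _ ⟨m, rfl⟩
    rcases Nat.eq_zero_or_pos m with rfl | hm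
    · linarith [hAθ 0]
    · have := hAup 0 m hm
      simpa using this.trans (by norm_num)
  set a : ℝ := sSup (Set.range A) with ha
  have hAle : ∀ n, A n ≤ a := fun n => le_csSup hbdd ⟨n, rfl⟩
  have haup : ∀ n, a ≤ A n + 1 / (n + 1) := by
    intro n
    refine csSup_le ⟨A 0, ⟨0, rfl⟩⟩ ?_
    rintro _ ⟨m, rfl⟩
    rcases Nat.lt_or_ge m (n + 1) with h | h
    · have : A m ≤ A n := hAmono m n (Nat.lt_succ_iff.mp h)
      have : (0:ℝ) < 1 / (n + 1) := by positivity
      linarith [hAmono m n (Nat.lt_succ_iff.mp h)]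
    · exact hAup n m h
  have ha0 : 0 < a := lt_of_lt_of_le hθ0 ((hAθ 0).trans (hAle 0))
  -- distance estimates on the chain sets
  have hdist : ∀ n, ∀ x ∈ (c (n + 1)).1, ∀ y ∈ (c (n + 1)).1, x ≠ y →
      a - 2 / (n + 1) ≤ dist x y ∧ dist x y ≤ a + 2 / (n + 1) := by
    intro n x hx y hy hxy
    have h1 := hF3 (c n) n x hx y hy hxy
    have h2 := hF2 (c n) n x hx y hy
    have h3 := hAle n
    have h4 := haup n
    have hn : (0:ℝ) < 1 / (n + 1) := by positivity
    constructor
    · have : a - 2 / (n + 1) ≤ A n - 1 / (n + 1) := by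
        rw [show (2:ℝ) / (n+1) = 1/(n+1) + 1/(n+1) by ring]
        linarith
      linarith
    · have : A n + 1 / (n + 1) ≤ a + 2 / (n + 1) := by
        rw [show (2:ℝ) / (n+1) = 1/(n+1) + 1/(n+1) by ring]
        linarith
      linarith
  -- choice of indices
  set nn : ℕ → ℕ := fun i => ⌈(2 * i) / a⌉₊ with hnn
  have hnnmono : Monotone nn := by
    intro i j hij
    refine Nat.ceil_mono ?_
    gcongr
  have hnnkey : ∀ i : ℕ, 1 ≤ i → 2 / ((nn i : ℝ) + 1) ≤ a / i := by
    intro i hi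
    have hi0 : (0:ℝ) < i := by exact_mod_cast hi
    have h1 : (2 * i) / a ≤ (nn i : ℝ) := Nat.le_ceil _
    have h2 : (0:ℝ) < (nn i : ℝ) + 1 := by positivity
    rw [div_le_div_iff₀ h2 hi0]
    have : 2 * i ≤ a * ((nn i : ℝ)) := by
      rw [div_le_iff₀ ha0] at h1; linarith
    nlinarith
  -- choice of the points
  have pickstep : ∀ (n : ℕ) (s : Finset M), ∃ x : M, x ∈ (c n).1 ∧ x ∉ s := by
    intro n s
    obtain ⟨x, hx⟩ := ((c n).2.diff s.finite_toSet).nonempty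
    exact ⟨x, hx.1, hx.2⟩
  choose g hg1 hg2 using pickstep
  let p : ℕ → M × Finset M := fun i => Nat.rec
    (let x := g (nn 0 + 1) ∅; (x, {x}))
    (fun i q => let x := g (nn (i + 1) + 1) q.2; (x, insert x q.2)) i
  set u : ℕ → M := fun i => (p i).1 with hu
  have hmemS : ∀ i, u i ∈ (c (nn i + 1)).1 := by
    intro i
    cases i with
    | zero => exact hg1 (nn 0 + 1) ∅
    | succ i => exact hg1 (nn (i + 1) + 1) (p i).2
  have hmemF : ∀ i, u i ∈ (p i).2 := by
    intro i
    cases i with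
    | zero => exact Finset.mem_singleton_self _
    | succ i => exact Finset.mem_insert_self _ _
  have hFsub : ∀ i, (p i).2 ⊆ (p (i + 1)).2 := fun i => Finset.subset_insert _ _
  have hFchain : ∀ i j, i ≤ j → (p i).2 ⊆ (p j).2 := by
    intro i j hij
    induction j with
    | zero => simp_all
    | succ j ih =>
      rcases Nat.lt_or_ge i (j + 1) with h | h
      · exact (ih (Nat.lt_succ_iff.mp h)).trans (hFsub j)
      · have : i = j + 1 := le_antisymm hij h
        subst this; exact fun _ h => h
  have hinj : ∀ i j, i < j → u i ≠ u j := by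
    intro i j hij heq
    obtain ⟨j, rfl⟩ := Nat.exists_eq_add_of_lt hij
    have h1 : u (i + j + 1) ∉ (p (i + j)).2 := hg2 (nn (i + j + 1) + 1) (p (i + j)).2
    have h2 : u i ∈ (p (i + j)).2 := hFchain i (i + j) (Nat.le_add_right i j) (hmemF i)
    exact h1 (heq ▸ h2)
  -- conclusion
  refine ⟨a, ha0, u, ?_⟩
  intro i j hi hij
  have hui : u i ∈ (c (nn i + 1)).1 := hmemS i
  have huj : u j ∈ (c (nn i + 1)).1 :=
    hchain (nn i + 1) (nn j + 1) (by have := hnnmono hij.le; omega) (hmemS j)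
  obtain ⟨hlow, hhigh⟩ := hdist (nn i) (u i) hui (u j) huj (hinj i j hij)
  have hkey := hnnkey i hi
  have hi0 : (0:ℝ) < i := by exact_mod_cast hi
  constructor
  · have : a * ((i : ℝ) - 1) / i = a - a / i := by field_simp
    rw [this]
    linarith
  · have : a * ((i : ℝ) + 1) / i = a + a / i := by field_simp
    rw [this]
    linarith
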